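/- (Covering number of the deep ReLU network class.) Let L ∈ ℕ, let d = (d_0, d_1, …, d_{L+1}) be positive integers, let C ≥ 1, and let V = Σ_{ℓ=1}^{L+1} d_ℓ (d_{ℓ−1} + 1) be the total number of weights. Let 𝒢 be the set of all deep ReLU networks of depth L with width vector d and weights bounded in absolute value by C. Then for every δ > 0 there exists a finite subset F ⊆ 𝒢 of cardinality at most (⌈2C/δ⌉ + 1)^V such that for every h ∈ 𝒢 there is f ∈ F with sup_{x ∈ [0,1]^{d_0}} ‖h(x) − f(x)‖_∞ ≤ δ (L+1) ∏_{ℓ=0}^{L} C (d_ℓ + 1). -/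

import Mathlib

open Finset

/-- A deep ReLU network of depth `L` with width function `d` (only the values
`d 0, …, d (L+1)` are relevant): for `ℓ = 0, …, L`, the `(ℓ+1)`-st affine layer
`𝓛_{ℓ+1}(z) = M_ℓ z + b_ℓ` maps `ℝ^{d ℓ}` to `ℝ^{d (ℓ+1)}`. -/
structure ReLUNet (L : ℕ) (d : ℕ → ℕ) where
  M : (ℓ : ℕ) → Matrix (Fin (d (ℓ + 1))) (Fin (d ℓ)) ℝ
  b : (ℓ : ℕ) → Fin (d (ℓ + 1)) → ℝ

namespace ReLUNet

variable {L : ℕ} {d : ℕ → ℕ}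

/-- The vector after `k` affine layers, each followed by the entrywise
ReLU activation `u ↦ max u 0`. -/
def hidden (net : ReLUNet L d) : (k : ℕ) → (Fin (d 0) → ℝ) → Fin (d k) → ℝ
  | 0, x => x
  | k + 1, x => fun i => max ((net.M k).mulVec (net.hidden k x) i + net.b k i) 0

/-- The output of the network: the final affine layer `𝓛_{L+1}` (without activation)
applied to the hidden representation after `L` activated layers, i.e.
`h(x) = 𝓛_{L+1} ∘ σ̄_L ∘ 𝓛_L ∘ ⋯ ∘ σ̄_1 ∘ 𝓛_1 (x)`. -/
def eval (net : ReLUNet L d) (x : Fin (d 0) → ℝ) : Fin (d (L + 1)) → ℝ :=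
  (net.M L).mulVec (net.hidden L x) + net.b L

/-- All weights (entries of the matrices `M_ℓ` and biases `b_ℓ`, `ℓ = 0, …, L`)
are bounded in absolute value by `C`. -/
def WeightsBounded (net : ReLUNet L d) (C : ℝ) : Prop :=
  (∀ ℓ ≤ L, ∀ i j, |net.M ℓ i j| ≤ C) ∧ ∀ ℓ ≤ L, ∀ i, |net.b ℓ i| ≤ C

end ReLUNet

/-- **Covering number of the deep ReLU network class.**
Let `𝒢` be the set of all functions realized by depth-`L` ReLU networks with width
vector `d` and weights bounded in absolute value by `C ≥ 1`, and let
`V = Σ_{ℓ=1}^{L+1} d_ℓ (d_{ℓ−1} + 1)` be the total number of weights. Then for every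
`δ > 0` there is a finite subset `F ⊆ 𝒢` of cardinality at most `(⌈2C/δ⌉ + 1)^V`
such that every `h ∈ 𝒢` is within `δ (L+1) ∏_{ℓ=0}^{L} C (d_ℓ + 1)` of some `f ∈ F`
in the supremum norm over `[0,1]^{d_0}`. -/

lemma step_diff {m n : ℕ} {C δ B E : ℝ}
    (hC0 : 0 ≤ C) (hδ0 : 0 ≤ δ) (hB0 : 0 ≤ B) (hE0 : 0 ≤ E)
    (M₁ M₂ : Matrix (Fin m) (Fin n) ℝ) (b₁ b₂ : Fin m → ℝ) (v₁ v₂ : Fin n → ℝ)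
    (hM₁ : ∀ i j, |M₁ i j| ≤ C) (hMd : ∀ i j, |M₁ i j - M₂ i j| ≤ δ)
    (hbd : ∀ i, |b₁ i - b₂ i| ≤ δ) (hv₂ : ∀ j, |v₂ j| ≤ B)
    (hE : ∀ j, |v₁ j - v₂ j| ≤ E) (i : Fin m) :
    |(M₁.mulVec v₁ i + b₁ i) - (M₂.mulVec v₂ i + b₂ i)| ≤ n * (C * E + δ * B) + δ := by
  have key : ∀ j, |M₁ i j * v₁ j - M₂ i j * v₂ j| ≤ C * E + δ * B := by
    intro j
    have h1 : M₁ i j * v₁ j - M₂ i j * v₂ j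
        = M₁ i j * (v₁ j - v₂ j) + (M₁ i j - M₂ i j) * v₂ j := by ring
    rw [h1]
    calc |M₁ i j * (v₁ j - v₂ j) + (M₁ i j - M₂ i j) * v₂ j|
        ≤ |M₁ i j * (v₁ j - v₂ j)| + |(M₁ i j - M₂ i j) * v₂ j| := abs_add_le _ _
      _ ≤ C * E + δ * B := by
          rw [abs_mul, abs_mul]
          exact add_le_add
            (mul_le_mul (hM₁ i j) (hE j) (abs_nonneg _) hC0)
            (mul_le_mul (hMd i j) (hv₂ j) (abs_nonneg _) hδ0)
  have hsum : M₁.mulVec v₁ i = ∑ j, M₁ i j * v₁ j := by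
    simp [Matrix.mulVec, dotProduct]
  have hsum2 : M₂.mulVec v₂ i = ∑ j, M₂ i j * v₂ j := by
    simp [Matrix.mulVec, dotProduct]
  rw [hsum, hsum2]
  have h2 : (∑ j, M₁ i j * v₁ j + b₁ i) - (∑ j, M₂ i j * v₂ j + b₂ i)
      = (∑ j, (M₁ i j * v₁ j - M₂ i j * v₂ j)) + (b₁ i - b₂ i) := by
    rw [Finset.sum_sub_distrib]; ring
  rw [h2]
  calc _ ≤ |∑ j, (M₁ i j * v₁ j - M₂ i j * v₂ j)| + |b₁ i - b₂ i| := abs_add_le _ _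
    _ ≤ (∑ j : Fin n, |M₁ i j * v₁ j - M₂ i j * v₂ j|) + δ :=
        add_le_add (Finset.abs_sum_le_sum_abs _ _) (hbd i)
    _ ≤ (∑ _j : Fin n, (C * E + δ * B)) + δ := by
        gcongr with j _; exact key j
    _ = n * (C * E + δ * B) + δ := by simp [Finset.sum_const]; ring

lemma step_bound {m n : ℕ} {C B : ℝ}
    (M : Matrix (Fin m) (Fin n) ℝ) (b : Fin m → ℝ) (v : Fin n → ℝ)
    (hM : ∀ i j, |M i j| ≤ C) (hb : ∀ i, |b i| ≤ C) (hv : ∀ j, |v j| ≤ B)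
    (hB : 1 ≤ B) (hC : 1 ≤ C) (i : Fin m) :
    |M.mulVec v i + b i| ≤ C * (n + 1) * B := by
  have hC0 : 0 ≤ C := zero_le_one.trans hC
  have hB0 : 0 ≤ B := zero_le_one.trans hB
  have hsum : M.mulVec v i = ∑ j, M i j * v j := by
    simp [Matrix.mulVec, dotProduct]
  rw [hsum]
  calc |∑ j, M i j * v j + b i|
      ≤ |∑ j, M i j * v j| + |b i| := abs_add_le _ _
    _ ≤ (∑ j : Fin n, |M i j * v j|) + C :=
        add_le_add (Finset.abs_sum_le_sum_abs _ _) (hb i)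
    _ ≤ (∑ _j : Fin n, C * B) + C := by
        gcongr with j _
        rw [abs_mul]
        exact mul_le_mul (hM i j) (hv j) (abs_nonneg _) hC0
    _ = n * (C * B) + C := by simp [mul_comm]
    _ ≤ n * (C * B) + C * B := by nlinarith
    _ = C * (n + 1) * B := by ring

lemma one_le_prodB {d : ℕ → ℕ} {C : ℝ} (hC : 1 ≤ C) (k : ℕ) :
    1 ≤ ∏ ℓ ∈ range k, C * ((d ℓ : ℝ) + 1) := by
  have h := Finset.prod_le_prod (s := range k) (f := fun _ => (1 : ℝ))
    (g := fun ℓ => C * ((d ℓ : ℝ) + 1)) (fun _ _ => zero_le_one)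
    (fun ℓ _ => by show (1:ℝ) ≤ C * ((d ℓ : ℝ) + 1); nlinarith [mul_nonneg (zero_le_one.trans hC) (by positivity : (0:ℝ) ≤ ((d ℓ : ℕ) : ℝ))])
  simpa using h

lemma hidden_bound {L : ℕ} {d : ℕ → ℕ} (net : ReLUNet L d) {C : ℝ} (hC : 1 ≤ C)
    (hw : net.WeightsBounded C) (x : Fin (d 0) → ℝ) (hx : ∀ i, |x i| ≤ 1) :
    ∀ k, k ≤ L → ∀ i, |net.hidden k x i| ≤ ∏ ℓ ∈ range k, C * ((d ℓ : ℝ) + 1) := by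
  intro k
  induction k with
  | zero => intro _ i; simpa [ReLUNet.hidden] using hx i
  | succ k ih =>
    intro hk i
    have hk' : k ≤ L := Nat.le_of_succ_le hk
    have hstep := step_bound (net.M k) (net.b k) (net.hidden k x)
      (hw.1 k hk') (hw.2 k hk') (ih hk') (one_le_prodB hC k) hC i
    rw [Finset.prod_range_succ]
    calc |net.hidden (k+1) x i|
        ≤ |(net.M k).mulVec (net.hidden k x) i + net.b k i| := by
          simp only [ReLUNet.hidden]
          calc |max ((net.M k).mulVec (net.hidden k x) i + net.b k i) 0|
              ≤ max |(net.M k).mulVec (net.hidden k x) i + net.b k i| |0| :=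
                abs_max_le_max_abs_abs
            _ = _ := by simp
      _ ≤ C * ((d k : ℝ) + 1) * ∏ ℓ ∈ range k, C * ((d ℓ : ℝ) + 1) := hstep
      _ = (∏ ℓ ∈ range k, C * ((d ℓ : ℝ) + 1)) * (C * ((d k : ℝ) + 1)) := by ring

lemma arith_step {C δ Bk : ℝ} (n k : ℕ) (hC : 1 ≤ C) (hδ : 0 ≤ δ) (hB : 1 ≤ Bk) :
    (n : ℝ) * (C * (δ * k * Bk) + δ * Bk) + δ
      ≤ δ * ((k : ℝ) + 1) * (Bk * (C * ((n : ℝ) + 1))) := by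
  have hn : (0:ℝ) ≤ (n:ℝ) := by positivity
  have hk : (0:ℝ) ≤ (k:ℝ) := by positivity
  have hB0 : (0:ℝ) ≤ Bk := zero_le_one.trans hB
  have hC0 : (0:ℝ) ≤ C := zero_le_one.trans hC
  have ha : 0 ≤ δ * (C * ((k:ℝ) * Bk)) := by positivity
  have hb2 : 0 ≤ δ * ((C - 1) * ((n:ℝ) * Bk)) :=
    mul_nonneg hδ (mul_nonneg (sub_nonneg.2 hC) (mul_nonneg hn hB0))
  have hcb : (1:ℝ) ≤ C * Bk := by nlinarith
  have hc : 0 ≤ δ * (C * Bk - 1) := mul_nonneg hδ (by linarith)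
  nlinarith [ha, hb2, hc]

lemma hidden_diff {L : ℕ} {d : ℕ → ℕ} (g f : ReLUNet L d) {C δ : ℝ}
    (hC : 1 ≤ C) (hδ : 0 ≤ δ)
    (hg : g.WeightsBounded C) (hf : f.WeightsBounded C)
    (hM : ∀ ℓ ≤ L, ∀ i j, |g.M ℓ i j - f.M ℓ i j| ≤ δ)
    (hb : ∀ ℓ ≤ L, ∀ i, |g.b ℓ i - f.b ℓ i| ≤ δ)
    (x : Fin (d 0) → ℝ) (hx : ∀ i, |x i| ≤ 1) :
    ∀ k, k ≤ L → ∀ i, |g.hidden k x i - f.hidden k x i|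
      ≤ δ * k * ∏ ℓ ∈ range k, C * ((d ℓ : ℝ) + 1) := by
  have hC0 : 0 ≤ C := zero_le_one.trans hC
  intro k
  induction k with
  | zero => intro _ i; simp [ReLUNet.hidden]
  | succ k ih =>
    intro hk i
    have hk' : k ≤ L := Nat.le_of_succ_le hk
    set Bk := ∏ ℓ ∈ range k, C * ((d ℓ : ℝ) + 1) with hBk
    have hB1 : 1 ≤ Bk := one_le_prodB hC k
    have hE0 : 0 ≤ δ * k * Bk := by positivity
    have hstep := step_diff hC0 hδ (zero_le_one.trans hB1) hE0
      (g.M k) (f.M k) (g.b k) (f.b k) (g.hidden k x) (f.hidden k x)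
      (hg.1 k hk') (hM k hk') (hb k hk')
      (hidden_bound f hC hf x hx k hk') (ih hk') i
    have habs : |g.hidden (k+1) x i - f.hidden (k+1) x i|
        ≤ |((g.M k).mulVec (g.hidden k x) i + g.b k i)
            - ((f.M k).mulVec (f.hidden k x) i + f.b k i)| := by
      simp only [ReLUNet.hidden]
      exact abs_max_sub_max_le_abs _ _ 0
    rw [Finset.prod_range_succ]
    calc |g.hidden (k+1) x i - f.hidden (k+1) x i|
        ≤ (d k : ℝ) * (C * (δ * k * Bk) + δ * Bk) + δ := habs.trans hstep
      _ ≤ δ * ((k : ℝ) + 1) * (Bk * (C * ((d k : ℝ) + 1))) :=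
          arith_step (d k) k hC hδ hB1
      _ = δ * ((k : ℝ) + 1) * (Bk * (C * ((d k : ℝ) + 1))) := rfl
      _ = δ * ((k + 1 : ℕ) : ℝ) * (Bk * (C * ((d k : ℝ) + 1))) := by push_cast; ring

lemma eval_diff {L : ℕ} {d : ℕ → ℕ} (g f : ReLUNet L d) {C δ : ℝ}
    (hC : 1 ≤ C) (hδ : 0 ≤ δ)
    (hg : g.WeightsBounded C) (hf : f.WeightsBounded C)
    (hM : ∀ ℓ ≤ L, ∀ i j, |g.M ℓ i j - f.M ℓ i j| ≤ δ)
    (hb : ∀ ℓ ≤ L, ∀ i, |g.b ℓ i - f.b ℓ i| ≤ δ)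
    (x : Fin (d 0) → ℝ) (hx : ∀ i, |x i| ≤ 1) (i : Fin (d (L + 1))) :
    |g.eval x i - f.eval x i|
      ≤ δ * ((L : ℝ) + 1) * ∏ ℓ ∈ range (L + 1), C * ((d ℓ : ℝ) + 1) := by
  have hC0 : 0 ≤ C := zero_le_one.trans hC
  set BL := ∏ ℓ ∈ range L, C * ((d ℓ : ℝ) + 1) with hBL
  have hB1 : 1 ≤ BL := one_le_prodB hC L
  have hE0 : 0 ≤ δ * L * BL := by positivity
  have hstep := step_diff hC0 hδ (zero_le_one.trans hB1) hE0
    (g.M L) (f.M L) (g.b L) (f.b L) (g.hidden L x) (f.hidden L x)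
    (hg.1 L le_rfl) (hM L le_rfl) (hb L le_rfl)
    (hidden_bound f hC hf x hx L le_rfl) (hidden_diff g f hC hδ hg hf hM hb x hx L le_rfl) i
  rw [Finset.prod_range_succ]
  calc |g.eval x i - f.eval x i|
      = |((g.M L).mulVec (g.hidden L x) i + g.b L i)
          - ((f.M L).mulVec (f.hidden L x) i + f.b L i)| := by
        simp [ReLUNet.eval, Pi.add_apply]
    _ ≤ (d L : ℝ) * (C * (δ * L * BL) + δ * BL) + δ := hstep
    _ ≤ δ * ((L : ℝ) + 1) * (BL * (C * ((d L : ℝ) + 1))) := arith_step (d L) L hC hδ hB1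
    _ = δ * ((L : ℝ) + 1) * (BL * (C * ((d L : ℝ) + 1))) := rfl

/-- Build a `ReLUNet` from a finitely-indexed parameter tuple. -/
def mkNet (L : ℕ) (d : ℕ → ℕ)
    (p : ∀ ℓ : Fin (L + 1),
      Matrix (Fin (d (ℓ.1 + 1))) (Fin (d ℓ.1)) ℝ × (Fin (d (ℓ.1 + 1)) → ℝ)) :
    ReLUNet L d :=
  ⟨fun ℓ => if h : ℓ < L + 1 then (p ⟨ℓ, h⟩).1 else 0,
   fun ℓ => if h : ℓ < L + 1 then (p ⟨ℓ, h⟩).2 else 0⟩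

lemma mkNet_M (L : ℕ) (d : ℕ → ℕ) (p) (ℓ : ℕ) (h : ℓ < L + 1) :
    (mkNet L d p).M ℓ = (p ⟨ℓ, h⟩).1 := dif_pos h

lemma mkNet_b (L : ℕ) (d : ℕ → ℕ) (p) (ℓ : ℕ) (h : ℓ < L + 1) :
    (mkNet L d p).b ℓ = (p ⟨ℓ, h⟩).2 := dif_pos h

theorem ReLUNet.covering {L : ℕ} {d : ℕ → ℕ} (hd : ∀ ℓ ≤ L + 1, 0 < d ℓ)
    {C : ℝ} (hC : 1 ≤ C) (V : ℕ)
    (hV : V = ∑ ℓ ∈ Finset.range (L + 1), d (ℓ + 1) * (d ℓ + 1))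
    (𝒢 : Set ((Fin (d 0) → ℝ) → Fin (d (L + 1)) → ℝ))
    (h𝒢 : 𝒢 = {f | ∃ net : ReLUNet L d, net.WeightsBounded C ∧ f = net.eval}) :
    ∀ δ > (0 : ℝ), ∃ F : Finset ((Fin (d 0) → ℝ) → Fin (d (L + 1)) → ℝ),
      ↑F ⊆ 𝒢 ∧ F.card ≤ (⌈2 * C / δ⌉₊ + 1) ^ V ∧
      ∀ h ∈ 𝒢, ∃ f ∈ F, ∀ x : Fin (d 0) → ℝ, (∀ i, x i ∈ Set.Icc (0 : ℝ) 1) →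
        ‖h x - f x‖ ≤ δ * (L + 1) * ∏ ℓ ∈ Finset.range (L + 1), C * ((d ℓ : ℝ) + 1) := by
  classical
  intro δ hδ
  have hC0 : (0 : ℝ) ≤ C := zero_le_one.trans hC
  set N := ⌈2 * C / δ⌉₊ with hN
  -- the grid
  set G : Finset ℝ := (Finset.range (N + 1)).image (fun k : ℕ => min (-C + (k : ℝ) * δ) C) with hGdef
  -- the quantizer
  set q : ℝ → ℝ := fun w => -C + (⌊(w + C) / δ⌋₊ : ℝ) * δ with hqdef
  have hq_le : ∀ w : ℝ, |w| ≤ C → q w ≤ w := by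
    intro w hw
    have hw' : -C ≤ w := (abs_le.1 hw).1
    have h0 : 0 ≤ (w + C) / δ := div_nonneg (by linarith) hδ.le
    have := Nat.floor_le h0
    have h2 : (⌊(w + C) / δ⌋₊ : ℝ) * δ ≤ w + C := by
      rw [← le_div_iff₀ hδ]; exact this
    simp only [hqdef]; linarith
  have hq_ge : ∀ w : ℝ, -C ≤ q w := by
    intro w
    have : 0 ≤ (⌊(w + C) / δ⌋₊ : ℝ) * δ := by positivity
    simp only [hqdef]; linarith
  have hq_close : ∀ w : ℝ, |w| ≤ C → |w - q w| ≤ δ := by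
    intro w hw
    have h1 := hq_le w hw
    have h2 : (w + C) / δ < ⌊(w + C) / δ⌋₊ + 1 := Nat.lt_floor_add_one _
    have h3 : w + C < ((⌊(w + C) / δ⌋₊ : ℝ) + 1) * δ := by
      rw [← div_lt_iff₀ hδ]; exact h2
    rw [abs_le]
    constructor
    · linarith
    · simp only [hqdef] at h1 ⊢; nlinarith
  have hq_bound : ∀ w : ℝ, |w| ≤ C → |q w| ≤ C := by
    intro w hw
    exact abs_le.2 ⟨hq_ge w, (hq_le w hw).trans (abs_le.1 hw).2⟩
  have hq_memG : ∀ w : ℝ, |w| ≤ C → q w ∈ G := by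
    intro w hw
    have hk : ⌊(w + C) / δ⌋₊ ≤ N := by
      have h1 : (w + C) / δ ≤ 2 * C / δ :=
        (div_le_div_iff_of_pos_right hδ).2 (by linarith [(abs_le.1 hw).2])
      exact (Nat.floor_le_floor h1).trans (Nat.floor_le_ceil _)
    have hqC : q w ≤ C := (hq_le w hw).trans (abs_le.1 hw).2
    rw [hGdef, Finset.mem_image]
    refine ⟨⌊(w + C) / δ⌋₊, Finset.mem_range.2 (Nat.lt_succ_of_le hk), ?_⟩
    rw [min_eq_left (by simpa [hqdef] using hqC)]
  have hG_card : G.card ≤ N + 1 :=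
    (Finset.card_image_le).trans (by simp)
  -- the finite parameter space
  set S : Finset (∀ ℓ : Fin (L + 1),
      Matrix (Fin (d (ℓ.1 + 1))) (Fin (d ℓ.1)) ℝ × (Fin (d (ℓ.1 + 1)) → ℝ)) :=
    Fintype.piFinset (fun ℓ =>
      (Fintype.piFinset fun _ => Fintype.piFinset fun _ => G) ×ˢ
        (Fintype.piFinset fun _ => G)) with hSdef
  have hG_bd : ∀ y ∈ G, |y| ≤ C := by
    intro y hy
    rw [hGdef, Finset.mem_image] at hy
    obtain ⟨k, -, rfl⟩ := hy
    have h1 : 0 ≤ (k : ℝ) * δ := by positivity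
    rw [abs_le]
    refine ⟨le_min (by linarith) (neg_le_self hC0), min_le_right _ _⟩
  have hmk_bounded : ∀ p ∈ S, (mkNet L d p).WeightsBounded C := by
    intro p hp
    rw [hSdef] at hp; replace hp := Fintype.mem_piFinset.1 hp
    constructor
    · intro ℓ hℓ i j
      have hℓ' : ℓ < L + 1 := Nat.lt_succ_of_le hℓ
      rw [mkNet_M L d p ℓ hℓ']
      have h1 := (Finset.mem_product.1 (hp ⟨ℓ, hℓ'⟩)).1
      rw [Fintype.mem_piFinset] at h1
      have h2 := h1 i
      rw [Fintype.mem_piFinset] at h2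
      exact hG_bd _ (h2 j)
    · intro ℓ hℓ i
      have hℓ' : ℓ < L + 1 := Nat.lt_succ_of_le hℓ
      rw [mkNet_b L d p ℓ hℓ']
      have h1 := (Finset.mem_product.1 (hp ⟨ℓ, hℓ'⟩)).2
      rw [Fintype.mem_piFinset] at h1
      exact hG_bd _ (h1 i)
  refine ⟨S.image (fun p => (mkNet L d p).eval), ?_, ?_, ?_⟩
  · intro f hf
    rw [Finset.coe_image] at hf
    obtain ⟨p, hp, rfl⟩ := hf
    rw [h𝒢]
    exact ⟨mkNet L d p, hmk_bounded p hp, rfl⟩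
  · refine Finset.card_image_le.trans ?_
    have hScard : S.card = ∏ ℓ : Fin (L + 1), G.card ^ (d (ℓ.1 + 1) * (d ℓ.1 + 1)) := by
      rw [hSdef]; refine (Fintype.card_piFinset _).trans ?_
      refine Finset.prod_congr rfl fun ℓ _ => ?_
      refine (Finset.card_product _ _).trans ?_; rw [Fintype.card_piFinset, Fintype.card_piFinset]
      simp only [Fintype.card_piFinset, Finset.prod_const, Finset.card_univ,
        Fintype.card_fin]
      rw [← pow_mul, ← pow_add]
      ring_nf
    rw [hScard]
    calc ∏ ℓ : Fin (L + 1), G.card ^ (d (ℓ.1 + 1) * (d ℓ.1 + 1))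
        ≤ ∏ ℓ : Fin (L + 1), (N + 1) ^ (d (ℓ.1 + 1) * (d ℓ.1 + 1)) :=
          Finset.prod_le_prod' fun ℓ _ => Nat.pow_le_pow_left hG_card _
      _ = (N + 1) ^ ∑ ℓ : Fin (L + 1), d (ℓ.1 + 1) * (d ℓ.1 + 1) := by
          rw [← Finset.prod_pow_eq_pow_sum]
      _ = (N + 1) ^ V := by
          rw [hV, ← Fin.sum_univ_eq_sum_range (f := fun ℓ => d (ℓ + 1) * (d ℓ + 1))]
  · intro h hh
    rw [h𝒢] at hh
    obtain ⟨net, hnet, rfl⟩ := hh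
    set p : ∀ ℓ : Fin (L + 1),
        Matrix (Fin (d (ℓ.1 + 1))) (Fin (d ℓ.1)) ℝ × (Fin (d (ℓ.1 + 1)) → ℝ) :=
      fun ℓ => (fun i j => q (net.M ℓ.1 i j), fun i => q (net.b ℓ.1 i)) with hpdef
    have hpS : p ∈ S := by
      rw [hSdef]; refine Fintype.mem_piFinset.2 ?_
      intro ℓ
      refine Finset.mem_product.2 ?_
      refine ⟨?_, ?_⟩
      · refine Fintype.mem_piFinset.2 ?_; intro i
        refine Fintype.mem_piFinset.2 ?_; intro j
        exact hq_memG _ (hnet.1 ℓ.1 (Nat.lt_succ_iff.1 ℓ.2) i j)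
      · rw [Fintype.mem_piFinset]; intro i
        exact hq_memG _ (hnet.2 ℓ.1 (Nat.lt_succ_iff.1 ℓ.2) i)
    refine ⟨(mkNet L d p).eval, Finset.mem_image_of_mem _ hpS, ?_⟩
    intro x hx
    have hx' : ∀ i, |x i| ≤ 1 := fun i => abs_le.2 ⟨by linarith [(hx i).1], (hx i).2⟩
    have hmkM : ∀ ℓ ≤ L, ∀ i j, (mkNet L d p).M ℓ i j = q (net.M ℓ i j) := by
      intro ℓ hℓ i j
      rw [mkNet_M L d p ℓ (Nat.lt_succ_of_le hℓ)]
    have hmkb : ∀ ℓ ≤ L, ∀ i, (mkNet L d p).b ℓ i = q (net.b ℓ i) := by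
      intro ℓ hℓ i
      rw [mkNet_b L d p ℓ (Nat.lt_succ_of_le hℓ)]
    have hMd : ∀ ℓ ≤ L, ∀ i j, |net.M ℓ i j - (mkNet L d p).M ℓ i j| ≤ δ := by
      intro ℓ hℓ i j
      rw [hmkM ℓ hℓ i j]
      exact hq_close _ (hnet.1 ℓ hℓ i j)
    have hbd : ∀ ℓ ≤ L, ∀ i, |net.b ℓ i - (mkNet L d p).b ℓ i| ≤ δ := by
      intro ℓ hℓ i
      rw [hmkb ℓ hℓ i]
      exact hq_close _ (hnet.2 ℓ hℓ i)
    have hfb : (mkNet L d p).WeightsBounded C := hmk_bounded p hpS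
    have hrhs : (0:ℝ) ≤ δ * ((L:ℝ) + 1) * ∏ ℓ ∈ range (L + 1), C * ((d ℓ : ℝ) + 1) := by
      have := one_le_prodB (d := d) hC (L + 1)
      positivity
    rw [pi_norm_le_iff_of_nonneg hrhs]
    intro i
    rw [Pi.sub_apply, Real.norm_eq_abs]
    exact eval_diff net (mkNet L d p) hC hδ.le hnet hfb hMd hbd x hx' i
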